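/- Let m = 2^s, M = 2^{s+2}, ω a primitive M-th root of unity, and for 0 ≤ i ≤ m−1 let r_i = (1, ω^{5^i}, ω^{2·5^i}, ..., ω^{(m−1)·5^i}) ∈ ℂ^m. Then for all i, j, the Hermitian inner product satisfies r_i · r_j† = m·δ_{i,j}. -/

import Mathlib

open Complex

private lemma binom_aux (x : ℤ) (u : ℕ) : x ^ 2 ∣ (1 + x) ^ u - 1 - u * x := by
  induction u with
  | zero => simp
  | succ n ih =>
    obtain ⟨c, hc⟩ := ih
    refine ⟨(1 + x) * c + n, ?_⟩
    have hn : ((1 + x) ^ n : ℤ) = 1 + n * x + x ^ 2 * c := by linarith [hc]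
    have : (1 + x) ^ (n + 1) = (1 + x) * (1 + x) ^ n := by ring
    rw [this, hn]
    push_cast
    ring

private lemma five_pow_two_pow (n : ℕ) :
    ∃ k : ℤ, (5 : ℤ) ^ (2 ^ n) = 1 + 2 ^ (n + 2) + 2 ^ (n + 3) * k := by
  induction n with
  | zero => exact ⟨0, by norm_num⟩
  | succ n ih =>
    obtain ⟨k, hk⟩ := ih
    refine ⟨k + 2 ^ n * (1 + 2 * k) ^ 2, ?_⟩
    have h1 : (5 : ℤ) ^ (2 ^ (n + 1)) = ((5 : ℤ) ^ (2 ^ n)) ^ 2 := by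
      rw [← pow_mul, pow_succ]
    have ha2 : (2 : ℤ) ^ (n + 2) = 2 ^ n * 4 := by ring
    have ha3 : (2 : ℤ) ^ (n + 3) = 2 ^ n * 8 := by ring
    have ha4 : (2 : ℤ) ^ (n + 4) = 2 ^ n * 16 := by ring
    have hb3 : (2 : ℤ) ^ (n + 1 + 2) = 2 ^ n * 8 := by ring
    have hb4 : (2 : ℤ) ^ (n + 1 + 3) = 2 ^ n * 16 := by ring
    rw [h1, hk, hb3, hb4, ha2]
    ring

private lemma odd_case (a u : ℕ) (hu : Odd u) :
    ¬ (2 : ℤ) ^ (a + 3) ∣ (5 : ℤ) ^ (2 ^ a * u) - 1 := by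
  obtain ⟨k, hk⟩ := five_pow_two_pow a
  set x : ℤ := 2 ^ (a + 2) + 2 ^ (a + 3) * k with hx
  have h5 : (5 : ℤ) ^ (2 ^ a * u) = (1 + x) ^ u := by
    rw [pow_mul, hk, hx]; ring_nf
  have hxsq : (2 : ℤ) ^ (a + 3) ∣ x ^ 2 := by
    refine ⟨2 ^ (a + 1) * (1 + 2 * k) ^ 2, ?_⟩
    rw [hx]; ring
  have hbin : (2 : ℤ) ^ (a + 3) ∣ (1 + x) ^ u - 1 - u * x :=
    hxsq.trans (binom_aux x u)
  intro hdvd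
  have h2 : (2 : ℤ) ^ (a + 3) ∣ (u : ℤ) * x := by
    have h3 : (u : ℤ) * x = ((5 : ℤ) ^ (2 ^ a * u) - 1) - ((1 + x) ^ u - 1 - u * x) := by
      rw [h5]; ring
    rw [h3]
    exact dvd_sub hdvd hbin
  have h4 : (u : ℤ) * x = 2 ^ (a + 2) * ((u : ℤ) * (1 + 2 * k)) := by
    rw [hx]; ring
  rw [h4, show a + 3 = (a + 2) + 1 from rfl, pow_succ] at h2
  have hpos : (0 : ℤ) < 2 ^ (a + 2) := by positivity
  have h6 : (2 : ℤ) ∣ (u : ℤ) * (1 + 2 * k) := (mul_dvd_mul_iff_left hpos.ne').mp h2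
  obtain ⟨v, hv⟩ := hu
  rcases h6 with ⟨w, hw⟩
  have hu' : ((u : ℤ)) = 2 * v + 1 := by exact_mod_cast hv
  rw [hu'] at hw
  have h1 : (1 : ℤ) = 2 * (w - v * (1 + 2 * k) - k) := by linear_combination hw
  have h21 : (2 : ℤ) ∣ 1 := ⟨_, h1⟩
  norm_num at h21

private lemma key_not_dvd (s i j : ℕ) (hi : i < 2 ^ s) (hj : j < 2 ^ s) (hij : i < j) :
    ¬ (2 : ℤ) ^ (s + 2) ∣ (5 : ℤ) ^ j - 5 ^ i := by
  intro hdvd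
  set t := j - i with ht
  have htpos : 0 < t := Nat.sub_pos_of_lt hij
  have htlt : t < 2 ^ s := lt_of_le_of_lt (Nat.sub_le _ _) hj
  have hsplit : (5 : ℤ) ^ j - 5 ^ i = 5 ^ i * (5 ^ t - 1) := by
    rw [mul_sub, mul_one, ← pow_add, ht, Nat.add_sub_cancel' hij.le]
  rw [hsplit] at hdvd
  have hcop : IsCoprime ((2 : ℤ) ^ (s + 2)) ((5 : ℤ) ^ i) := by
    apply IsCoprime.pow
    rw [Int.isCoprime_iff_gcd_eq_one]
    decide
  have hdvd' : (2 : ℤ) ^ (s + 2) ∣ (5 : ℤ) ^ t - 1 := hcop.dvd_of_dvd_mul_left hdvd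
  -- write t = 2^a * u with u odd
  set a := t.factorization 2 with ha
  have htne : t ≠ 0 := htpos.ne'
  have hfac : 2 ^ a * (t / 2 ^ a) = t := Nat.ordProj_mul_ordCompl_eq_self t 2
  set u := t / 2 ^ a with hu
  have hodd : Odd u := by
    have h2 : ¬ 2 ∣ u := Nat.not_dvd_ordCompl (by norm_num) htne
    exact Nat.odd_iff.mpr (Nat.two_dvd_ne_zero.mp h2)
  have haslt : a < s := by
    have h2a : 2 ^ a ≤ t := Nat.ordProj_le 2 htne
    have : (2 : ℕ) ^ a < 2 ^ s := lt_of_le_of_lt h2a htlt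
    exact (Nat.pow_lt_pow_iff_right (by norm_num)).mp this
  have hle : a + 3 ≤ s + 2 := by omega
  have hdvd'' : (2 : ℤ) ^ (a + 3) ∣ (5 : ℤ) ^ t - 1 :=
    (pow_dvd_pow 2 hle).trans hdvd'
  rw [← hfac] at hdvd''
  exact odd_case a u hodd hdvd''

private lemma key_ne (s i j : ℕ) (hi : i < 2 ^ s) (hj : j < 2 ^ s) (hne : i ≠ j) :
    ¬ (2 : ℤ) ^ (s + 2) ∣ (5 : ℤ) ^ i - 5 ^ j := by
  rcases hne.lt_or_gt with h | h
  · intro hd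
    exact key_not_dvd s i j hi hj h (by rw [show (5:ℤ)^j - 5^i = -(5^i - 5^j) by ring]; exact hd.neg_right)
  · exact key_not_dvd s j i hj hi h

theorem cyclotomic_rows_orthogonal (s : ℕ)
    (ω : ℂ) (hω : IsPrimitiveRoot ω (2 ^ (s + 2)))
    (i j : ℕ) (hi : i < 2 ^ s) (hj : j < 2 ^ s) :
    ∑ k ∈ Finset.range (2 ^ s),
      ω ^ (k * 5 ^ i) * (starRingEnd ℂ) (ω ^ (k * 5 ^ j)) =
      if i = j then (2 ^ s : ℂ) else 0 := by
  have hω0 : ω ≠ 0 := hω.ne_zero (by positivity)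
  have hnorm : ‖ω‖ = 1 := hω.norm'_eq_one (by positivity)
  have hconj : (starRingEnd ℂ) ω = ω⁻¹ := (Complex.inv_eq_conj hnorm).symm
  set ζ : ℂ := ω ^ ((5 : ℤ) ^ i - 5 ^ j) with hζ
  have hterm : ∀ k : ℕ, ω ^ (k * 5 ^ i) * (starRingEnd ℂ) (ω ^ (k * 5 ^ j)) = ζ ^ k := by
    intro k
    rw [map_pow, hconj, inv_pow, ← zpow_natCast ω (k * 5 ^ i), ← zpow_natCast ω (k * 5 ^ j),
      ← zpow_neg, ← zpow_add₀ hω0, hζ, ← zpow_natCast (ω ^ ((5 : ℤ) ^ i - 5 ^ j)) k,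
      ← zpow_mul]
    congr 1
    push_cast
    ring
  simp_rw [hterm]
  by_cases h : i = j
  · subst h
    have hζ1 : ζ = 1 := by rw [hζ, sub_self, zpow_zero]
    simp [hζ1]
  · have h4 : ∀ n : ℕ, (4 : ℤ) ∣ 5 ^ n - 1 := fun n => by
      simpa using sub_dvd_pow_sub_pow (5 : ℤ) 1 n
    have hζm : ζ ^ (2 ^ s) = 1 := by
      rw [hζ, ← zpow_natCast (ω ^ ((5 : ℤ) ^ i - 5 ^ j)) (2 ^ s), ← zpow_mul]
      rw [hω.zpow_eq_one_iff_dvd]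
      obtain ⟨c, hc⟩ := h4 i
      obtain ⟨d, hd⟩ := h4 j
      refine ⟨c - d, ?_⟩
      have h5 : (5 : ℤ) ^ i - 5 ^ j = 4 * (c - d) := by linarith
      push_cast
      rw [h5]
      ring
    have hζ1 : ζ ≠ 1 := by
      rw [hζ, Ne, hω.zpow_eq_one_iff_dvd]
      have := key_ne s i j hi hj h
      intro hd
      exact this (by exact_mod_cast hd)
    rw [geom_sum_eq hζ1, hζm, sub_self, zero_div, if_neg h]
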